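/- Fix d ≥ 1, n ≥ 1 and constants a > 0, b ∈ ℝ. Let μ be a probability measure on ℝ^𝒞 (with the product σ-algebra) such that μ(|φ_x| ≥ S) ≤ e^{−aS⁴ + b} for every x ∈ 𝒞 and every S > 0. Then for every a' with 0 < a' < a there exists b' ∈ ℝ such that for every integer N > n: μ(there exists x ∈ 𝒞 with ‖x‖_∞ > N and |φ_x| > (log ‖x‖_∞)^{1/3}) ≤ e^{−a'(log N)^{4/3} + b'}. In particular μ gives probability 1 to the set 𝒢 of configurations φ for which there exists N with |φ_x| ≤ (log ‖x‖_∞)^{1/3} for all x ∈ 𝒞 with ‖x‖_∞ > N. -/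

import Mathlib

open Finset

/-- A point of the `d = k+1` dimensional lattice `ℤ^d`, written as
(first coordinate, remaining `k` coordinates). -/
abbrev Pt (k : ℕ) := ℤ × (Fin k → ℤ)

/-- Nearest neighbors: `|x - y| = 1` (ℓ¹-distance one). -/
def isNN {k : ℕ} (x y : Pt k) : Prop :=
  |x.1 - y.1| + ∑ i, |x.2 i - y.2 i| = 1

instance {k : ℕ} (x y : Pt k) : Decidable (isNN x y) := by
  unfold isNN; infer_instance

/-- The domain 𝒞 = {x₁ ≥ n} ∪ {x₁ ≤ -n} ∪ C_n. -/
def inC (k n : ℕ) (x : Pt k) : Prop :=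
  (n : ℤ) ≤ x.1 ∨ x.1 ≤ -(n : ℤ) ∨ (|x.1| ≤ (n : ℤ) ∧ ∀ i, |x.2 i| ≤ (n : ℤ))

instance (k n : ℕ) : DecidablePred (inC k n) := fun x => by
  unfold inC; infer_instance

/-- The `2(k+1)` nearest neighbors of `x` in `ℤ^{k+1}`. -/
def nbrFinset {k : ℕ} (x : Pt k) : Finset (Pt k) :=
  {(x.1 + 1, x.2), (x.1 - 1, x.2)} ∪
    (Finset.univ : Finset (Fin k × Bool)).image
      (fun p => (x.1, Function.update x.2 p.1 (x.2 p.1 + if p.2 then 1 else -1)))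

/-- ψ is harmonic on 𝒞: for every x ∈ 𝒞, the sum of ψ(y) − ψ(x) over
nearest neighbors y of x lying in 𝒞 vanishes. -/
def HarmonicOnC (k n : ℕ) (ψ : Pt k → ℝ) : Prop :=
  ∀ x : Pt k, inC k n x →
    ∑ y ∈ (nbrFinset x).filter (fun y => inC k n y), (ψ y - ψ x) = 0

/-- The flux through the section Σ_ξ of the channel. -/
noncomputable def flux (k n : ℕ) (ψ : Pt k → ℝ) (ξ : ℤ) : ℝ :=
  ∑ v ∈ Fintype.piFinset (fun _ : Fin k => Finset.Icc (-(n : ℤ)) (n : ℤ)),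
    (ψ (ξ - 1, v) - ψ (ξ, v))

open MeasureTheory

/-- The ℓ^∞ norm of a lattice point. -/
def normInf {k : ℕ} (x : Pt k) : ℕ :=
  max x.1.natAbs (Finset.univ.sup fun i => (x.2 i).natAbs)

lemma lin_le_rpow {c ε t : ℝ} (hε : 0 < ε) (hc : 0 ≤ c) (ht : 0 ≤ t) :
    c * t ≤ ε * t ^ ((4:ℝ)/3) + c * (c/ε)^3 := by
  rcases le_or_gt t ((c/ε)^3) with h | h
  · have h1 : c * t ≤ c * (c/ε)^3 := mul_le_mul_of_nonneg_left h hc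
    have h2 : 0 ≤ ε * t ^ ((4:ℝ)/3) := by positivity
    linarith
  · have ht0 : 0 < t := lt_of_le_of_lt (by positivity) h
    have h0 : (0:ℝ) ≤ c/ε := by positivity
    have h13 : c/ε ≤ t ^ ((1:ℝ)/3) := by
      calc c/ε = ((c/ε)^3) ^ ((1:ℝ)/3) := by
            rw [← Real.rpow_natCast (c/ε) 3, ← Real.rpow_mul h0]; norm_num
        _ ≤ t ^ ((1:ℝ)/3) :=
            Real.rpow_le_rpow (by positivity) h.le (by norm_num)
    have h43 : t ^ ((4:ℝ)/3) = t * t ^ ((1:ℝ)/3) := by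
      rw [show (4:ℝ)/3 = 1 + 1/3 by norm_num, Real.rpow_add ht0, Real.rpow_one]
    have h2 : c * t = ε * (t * (c/ε)) := by field_simp
    have h3 : ε * (t * (c/ε)) ≤ ε * (t * t ^ ((1:ℝ)/3)) :=
      mul_le_mul_of_nonneg_left (mul_le_mul_of_nonneg_left h13 ht0.le) hε.le
    have h4 : 0 ≤ c * (c/ε)^3 := by positivity
    rw [h43]; linarith

noncomputable def latBox (k m : ℕ) : Finset (Pt k) :=
  Finset.Icc (-(m:ℤ)) m ×ˢ Fintype.piFinset fun _ => Finset.Icc (-(m:ℤ)) m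

lemma mem_box {k m : ℕ} {x : Pt k} (h : normInf x ≤ m) : x ∈ latBox k m := by
  have h1 : x.1.natAbs ≤ m := le_trans (le_max_left _ _) h
  have h2 : ∀ i, (x.2 i).natAbs ≤ m := fun i =>
    le_trans (Finset.le_sup (f := fun i => (x.2 i).natAbs) (Finset.mem_univ i))
      (le_trans (le_max_right _ _) h)
  simp only [latBox, Finset.mem_product, Fintype.mem_piFinset, Finset.mem_Icc]
  exact ⟨⟨by omega, by omega⟩, fun i => ⟨by have := h2 i; omega, by have := h2 i; omega⟩⟩

lemma card_box (k m : ℕ) : (latBox k m).card = (2*m+1)^(k+1) := by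
  unfold latBox
  simp only [Finset.card_product, Fintype.card_piFinset, Int.card_Icc,
    Finset.prod_const, Finset.card_univ, Fintype.card_fin]
  have : ((m:ℤ) + 1 - -(m:ℤ)).toNat = 2*m+1 := by omega
  rw [this, pow_succ]; ring

open MeasureTheory ENNReal in
lemma key_bound (k n : ℕ) (hn : 1 ≤ n) (a b : ℝ)
    (μ : Measure (Pt k → ℝ))
    (hμ : ∀ x : Pt k, inC k n x → ∀ S : ℝ, 0 < S →
      μ {φ | S ≤ |φ x|} ≤ ENNReal.ofReal (Real.exp (-a * S ^ 4 + b)))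
    (a' : ℝ) (ha' : 0 < a') (haa' : a' < a) :
    ∃ b' : ℝ, ∀ N : ℕ, n < N →
      μ {φ | ∃ x : Pt k, inC k n x ∧ N < normInf x ∧
          Real.log (normInf x) ^ ((1 : ℝ) / 3) < |φ x|} ≤
        ENNReal.ofReal (Real.exp (-a' * Real.log N ^ ((4 : ℝ) / 3) + b')) := by
  have hε : 0 < a - a' := by linarith
  set K : ℝ := ∑' m : ℕ, 1/(m:ℝ)^2 with hKdef
  have hKsum : Summable (fun m : ℕ => 1/(m:ℝ)^2) := by
    exact_mod_cast Real.summable_one_div_nat_pow.mpr (by norm_num)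
  have hK1 : (1:ℝ) ≤ K := by
    rw [hKdef]
    simpa using Summable.le_tsum hKsum 1 (fun j _ => by positivity)
  set M : ℝ := ((k:ℝ)+3) * (((k:ℝ)+3)/(a-a'))^3 + ((k:ℝ)+1) * Real.log 3 + b with hM
  refine ⟨M + Real.log K, ?_⟩
  intro N hN
  have hN2 : 2 ≤ N := by omega
  set C : ℝ := Real.exp (-a' * Real.log N ^ ((4:ℝ)/3) + M) with hC
  have hCpos : 0 < C := Real.exp_pos _
  set r : ℕ → ℝ := fun m =>
    if N < m then ((2*m+1:ℕ):ℝ)^(k+1) * Real.exp (-a * Real.log m ^ ((4:ℝ)/3) + b) else 0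
    with hr
  have hrg : ∀ m : ℕ, r m ≤ C * (1/(m:ℝ)^2) := by
    intro m
    simp only [hr]
    split_ifs with hm
    · have hm2 : 2 ≤ m := by omega
      have hm1 : (1:ℝ) ≤ (m:ℝ) := by exact_mod_cast Nat.one_le_of_lt hm2
      have hm0 : (0:ℝ) < m := by linarith
      have hlogm : 0 ≤ Real.log m := Real.log_nonneg hm1
      have h3m : (0:ℝ) < 3*(m:ℝ) := by linarith
      have h1 : ((2*m+1:ℕ):ℝ)^(k+1) ≤ Real.exp (((k:ℝ)+1) * Real.log (3*(m:ℝ))) := by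
        have hle : ((2*m+1:ℕ):ℝ)^(k+1) ≤ (3*(m:ℝ))^(k+1) := by
          apply pow_le_pow_left₀ (by positivity)
          push_cast; linarith
        calc ((2*m+1:ℕ):ℝ)^(k+1) ≤ (3*(m:ℝ))^(k+1) := hle
          _ = Real.exp (((k:ℝ)+1) * Real.log (3*(m:ℝ))) := by
              rw [← Real.exp_log (pow_pos h3m (k+1)), Real.log_pow]
              norm_num
      have hlin := lin_le_rpow (c := (k:ℝ)+3) (ε := a-a') (t := Real.log m) hε
        (by positivity) hlogm
      have hlog3m : Real.log (3*(m:ℝ)) = Real.log 3 + Real.log m :=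
        Real.log_mul (by norm_num) (by positivity)
      have hmono : Real.log N ^ ((4:ℝ)/3) ≤ Real.log m ^ ((4:ℝ)/3) := by
        gcongr
      have hmono' : a' * (Real.log N ^ ((4:ℝ)/3)) ≤ a' * (Real.log m ^ ((4:ℝ)/3)) :=
        mul_le_mul_of_nonneg_left hmono ha'.le
      have hexpineq : ((k:ℝ)+1) * Real.log (3*(m:ℝ)) + (-a * Real.log m ^ ((4:ℝ)/3) + b)
          ≤ (-a' * Real.log N ^ ((4:ℝ)/3) + M) + (-(2:ℝ) * Real.log m) := by
        rw [hlog3m, hM]; nlinarith [hlin, hmono']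
      have hexp2 : Real.exp (-(2:ℝ) * Real.log m) = 1/(m:ℝ)^2 := by
        rw [neg_mul, Real.exp_neg, one_div]
        congr 1
        rw [show ((2:ℝ)) = ((2:ℕ):ℝ) by norm_num, Real.exp_nat_mul, Real.exp_log hm0]
      calc ((2*m+1:ℕ):ℝ)^(k+1) * Real.exp (-a * Real.log m ^ ((4:ℝ)/3) + b)
          ≤ Real.exp (((k:ℝ)+1) * Real.log (3*(m:ℝ))) *
              Real.exp (-a * Real.log m ^ ((4:ℝ)/3) + b) :=
            mul_le_mul_of_nonneg_right h1 (Real.exp_pos _).le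
        _ = Real.exp (((k:ℝ)+1) * Real.log (3*(m:ℝ)) + (-a * Real.log m ^ ((4:ℝ)/3) + b)) :=
            (Real.exp_add _ _).symm
        _ ≤ Real.exp ((-a' * Real.log N ^ ((4:ℝ)/3) + M) + (-(2:ℝ) * Real.log m)) :=
            Real.exp_le_exp.mpr hexpineq
        _ = C * (1/(m:ℝ)^2) := by rw [Real.exp_add, hexp2, hC]
    · positivity
  have hrnn : ∀ m : ℕ, 0 ≤ r m := by
    intro m; simp only [hr]; split_ifs
    · positivity
    · exact le_rfl
  have hg : Summable (fun m : ℕ => C * (1/(m:ℝ)^2)) := hKsum.mul_left C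
  have hrsum : Summable r := Summable.of_nonneg_of_le hrnn hrg hg
  have htsum : ∑' m, r m ≤ Real.exp (-a' * Real.log N ^ ((4:ℝ)/3) + (M + Real.log K)) := by
    have h1 : ∑' m, r m ≤ C * K := by
      calc ∑' m, r m ≤ ∑' m : ℕ, C * (1/(m:ℝ)^2) := Summable.tsum_le_tsum hrg hrsum hg
        _ = C * K := by rw [hKdef, tsum_mul_left]
    have h2 : C * K = Real.exp (-a' * Real.log N ^ ((4:ℝ)/3) + (M + Real.log K)) := by
      rw [show -a' * Real.log N ^ ((4:ℝ)/3) + (M + Real.log K)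
            = (-a' * Real.log N ^ ((4:ℝ)/3) + M) + Real.log K by ring,
        Real.exp_add, Real.exp_log (by linarith : (0:ℝ) < K), hC]
    linarith
  -- measure estimate
  set Bset : ℕ → Set (Pt k → ℝ) := fun m =>
    if N < m then
      ⋃ x ∈ (latBox k m).filter (fun x => inC k n x),
        {φ : Pt k → ℝ | Real.log m ^ ((1:ℝ)/3) < |φ x|}
    else ∅ with hB
  have hEsub : {φ : Pt k → ℝ | ∃ x : Pt k, inC k n x ∧ N < normInf x ∧
      Real.log (normInf x) ^ ((1:ℝ)/3) < |φ x|} ⊆ ⋃ m, Bset m := by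
    rintro φ ⟨x, hx, hNx, hφ⟩
    refine Set.mem_iUnion.mpr ⟨normInf x, ?_⟩
    simp only [hB, if_pos hNx]
    exact Set.mem_biUnion (Finset.mem_coe.mpr
      (Finset.mem_filter.mpr ⟨mem_box le_rfl, hx⟩)) hφ
  have hBle : ∀ m : ℕ, μ (Bset m) ≤ ENNReal.ofReal (r m) := by
    intro m
    simp only [hB, hr]
    split_ifs with hm
    · have hm2 : 2 ≤ m := by omega
      have hm1 : (1:ℝ) < (m:ℝ) := by exact_mod_cast hm2
      have hSpos : 0 < Real.log m ^ ((1:ℝ)/3) :=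
        Real.rpow_pos_of_pos (Real.log_pos hm1) _
      have hS4 : (Real.log (m:ℝ) ^ ((1:ℝ)/3)) ^ (4:ℕ) = Real.log m ^ ((4:ℝ)/3) := by
        rw [← Real.rpow_natCast (Real.log (m:ℝ) ^ ((1:ℝ)/3)) 4,
          ← Real.rpow_mul (Real.log_nonneg hm1.le)]
        norm_num
      calc μ (⋃ x ∈ (latBox k m).filter (fun x => inC k n x),
              {φ : Pt k → ℝ | Real.log m ^ ((1:ℝ)/3) < |φ x|})
          ≤ ∑ x ∈ (latBox k m).filter (fun x => inC k n x),
              μ {φ : Pt k → ℝ | Real.log m ^ ((1:ℝ)/3) < |φ x|} :=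
            measure_biUnion_finset_le _ _
        _ ≤ ∑ _x ∈ (latBox k m).filter (fun x => inC k n x),
              ENNReal.ofReal (Real.exp (-a * Real.log m ^ ((4:ℝ)/3) + b)) := by
            apply Finset.sum_le_sum
            intro x hx
            have hxC : inC k n x := (Finset.mem_filter.mp hx).2
            refine le_trans (measure_mono (Set.setOf_subset_setOf.mpr (fun φ => le_of_lt))) ?_
            have := hμ x hxC _ hSpos
            rwa [hS4] at this
        _ = (((latBox k m).filter (fun x => inC k n x)).card : ℝ≥0∞) *
              ENNReal.ofReal (Real.exp (-a * Real.log m ^ ((4:ℝ)/3) + b)) := by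
            rw [Finset.sum_const, nsmul_eq_mul]
        _ ≤ (((2*m+1)^(k+1) : ℕ) : ℝ≥0∞) *
              ENNReal.ofReal (Real.exp (-a * Real.log m ^ ((4:ℝ)/3) + b)) := by
            gcongr
            exact_mod_cast le_trans (Finset.card_filter_le _ _) (le_of_eq (card_box k m))
        _ = ENNReal.ofReal (((2*m+1:ℕ):ℝ)^(k+1) *
              Real.exp (-a * Real.log m ^ ((4:ℝ)/3) + b)) := by
            rw [ENNReal.ofReal_mul (by positivity)]
            congr 1
            rw [show (((2*m+1:ℕ)):ℝ)^(k+1) = (((2*m+1)^(k+1):ℕ):ℝ) by push_cast; ring]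
            exact (ENNReal.ofReal_natCast _).symm
    · simp only [measure_empty, ENNReal.ofReal_zero, le_refl]
  calc μ {φ : Pt k → ℝ | ∃ x : Pt k, inC k n x ∧ N < normInf x ∧
        Real.log (normInf x) ^ ((1:ℝ)/3) < |φ x|}
      ≤ μ (⋃ m, Bset m) := measure_mono hEsub
    _ ≤ ∑' m, μ (Bset m) := measure_iUnion_le _
    _ ≤ ∑' m, ENNReal.ofReal (r m) := ENNReal.tsum_le_tsum hBle
    _ = ENNReal.ofReal (∑' m, r m) := (ENNReal.ofReal_tsum_of_nonneg hrnn hrsum).symm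
    _ ≤ ENNReal.ofReal (Real.exp (-a' * Real.log N ^ ((4:ℝ)/3) + (M + Real.log K))) :=
        ENNReal.ofReal_le_ofReal htsum

/-- Corollary C.2(2): if a probability measure μ on
configurations over 𝒞 satisfies the tail bound μ(|φ_x| ≥ S) ≤ e^{−aS⁴+b} for
all x ∈ 𝒞, then for every 0 < a' < a there is b' with
μ(∃ x ∈ 𝒞, ‖x‖_∞ > N, |φ_x| > (log‖x‖_∞)^{1/3}) ≤ e^{−a'(log N)^{4/3}+b'}
for all N > n; in particular μ(𝒢) = 1 for the set 𝒢 of good configurations. -/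
theorem good_configurations_full_measure (k n : ℕ) (hn : 1 ≤ n)
    (a b : ℝ) (ha : 0 < a)
    (μ : Measure (Pt k → ℝ)) [IsProbabilityMeasure μ]
    (hμ : ∀ x : Pt k, inC k n x → ∀ S : ℝ, 0 < S →
      μ {φ | S ≤ |φ x|} ≤ ENNReal.ofReal (Real.exp (-a * S ^ 4 + b))) :
    (∀ a' : ℝ, 0 < a' → a' < a → ∃ b' : ℝ, ∀ N : ℕ, n < N →
      μ {φ | ∃ x : Pt k, inC k n x ∧ N < normInf x ∧
          Real.log (normInf x) ^ ((1 : ℝ) / 3) < |φ x|} ≤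
        ENNReal.ofReal (Real.exp (-a' * Real.log N ^ ((4 : ℝ) / 3) + b'))) ∧
    μ {φ | ∃ N : ℕ, ∀ x : Pt k, inC k n x → N < normInf x →
        |φ x| ≤ Real.log (normInf x) ^ ((1 : ℝ) / 3)} = 1 := by
  constructor
  · exact fun a' ha' haa' => key_bound k n hn a b μ hμ a' ha' haa'
  · obtain ⟨b', hb'⟩ := key_bound k n hn a b μ hμ (a/2) (by linarith) (by linarith)
    set G : Set (Pt k → ℝ) := {φ | ∃ N : ℕ, ∀ x : Pt k, inC k n x → N < normInf x →
        |φ x| ≤ Real.log (normInf x) ^ ((1 : ℝ) / 3)} with hG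
    have hGm : MeasurableSet G := by
      have hGeq : G = ⋃ N : ℕ, ⋂ x : Pt k,
          {φ : Pt k → ℝ | inC k n x → N < normInf x →
            |φ x| ≤ Real.log (normInf x) ^ ((1 : ℝ) / 3)} := by
        ext φ; simp [hG, Set.mem_iUnion, Set.mem_iInter]
      rw [hGeq]
      refine MeasurableSet.iUnion fun N => MeasurableSet.iInter fun x => ?_
      by_cases h : inC k n x ∧ N < normInf x
      · have : {φ : Pt k → ℝ | inC k n x → N < normInf x →
            |φ x| ≤ Real.log (normInf x) ^ ((1 : ℝ) / 3)}
            = {φ : Pt k → ℝ | |φ x| ≤ Real.log (normInf x) ^ ((1 : ℝ) / 3)} := by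
          ext φ; simp [h.1, h.2]
        rw [this]
        exact measurableSet_le (measurable_pi_apply x).abs measurable_const
      · have : {φ : Pt k → ℝ | inC k n x → N < normInf x →
            |φ x| ≤ Real.log (normInf x) ^ ((1 : ℝ) / 3)} = Set.univ := by
          ext φ; simp only [Set.mem_setOf_eq, Set.mem_univ, iff_true]
          intro h1 h2; exact absurd ⟨h1, h2⟩ h
        rw [this]; exact MeasurableSet.univ
    have hcompl : ∀ N : ℕ, n < N → μ Gᶜ ≤
        ENNReal.ofReal (Real.exp (-(a/2) * Real.log N ^ ((4:ℝ)/3) + b')) := by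
      intro N hN
      refine le_trans (measure_mono ?_) (hb' N hN)
      intro φ hφ
      simp only [hG, Set.mem_compl_iff, Set.mem_setOf_eq, not_exists] at hφ
      have := hφ N
      push_neg at this
      obtain ⟨x, hx1, hx2, hx3⟩ := this
      exact ⟨x, hx1, hx2, hx3⟩
    have hzero : μ Gᶜ = 0 := by
      have hten : Filter.Tendsto
          (fun N : ℕ => ENNReal.ofReal (Real.exp (-(a/2) * Real.log N ^ ((4:ℝ)/3) + b')))
          Filter.atTop (nhds 0) := by
        rw [show (0:ENNReal) = ENNReal.ofReal 0 by simp]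
        apply ENNReal.tendsto_ofReal
        apply Real.tendsto_exp_atBot.comp
        have h1 : Filter.Tendsto (fun N : ℕ => Real.log N) Filter.atTop Filter.atTop :=
          Real.tendsto_log_atTop.comp tendsto_natCast_atTop_atTop
        have h2 : Filter.Tendsto (fun N : ℕ => Real.log N ^ ((4:ℝ)/3))
            Filter.atTop Filter.atTop :=
          (tendsto_rpow_atTop (by norm_num)).comp h1
        have h3 : Filter.Tendsto (fun N : ℕ => (a/2) * (Real.log N ^ ((4:ℝ)/3)))
            Filter.atTop Filter.atTop :=
          (Filter.tendsto_const_mul_atTop_of_pos (by linarith)).mpr h2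
        have h4 := Filter.tendsto_atBot_add_const_right Filter.atTop b'
          (Filter.tendsto_neg_atTop_atBot.comp h3)
        refine h4.congr fun N => by simp [Function.comp]; try ring
      have hev : ∀ᶠ N : ℕ in Filter.atTop, μ Gᶜ ≤
          ENNReal.ofReal (Real.exp (-(a/2) * Real.log N ^ ((4:ℝ)/3) + b')) :=
        Filter.eventually_atTop.mpr ⟨n+1, fun N hNn => hcompl N (by omega)⟩
      exact le_antisymm (ge_of_tendsto hten hev) (zero_le)
    exact (prob_compl_eq_zero_iff hGm).mp hzero
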